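/- arXiv:0903.3647 — 3 statements merged into one kernel-verified Lean document; each statement's English description precedes it below -/
import Mathlib

section
/- Assume N ≥ 2. Let C ∈ ℂ^r have Euclidean norm 1, let Φ = (φ₁,…,φ_K) be an orthonormal system in L²(Ω), and set Ψ = π(C,Φ). Then for almost every (x,y,x',y') ∈ Ω⁴, binom(N,2) ∫_{Ω^{N−2}} Ψ(x,y,Z) conj(Ψ(x',y',Z)) dZ = Σ_{i,j,k,l=1}^K γ_ijkl(C) φ_i(x) φ_j(y) conj(φ_k(x')) conj(φ_l(y')). -/
open MeasureTheory Complex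
open scoped BigOperators ComplexConjugate ENNReal

noncomputable section

abbrev E3 : Type := EuclideanSpace ℝ (Fin 3)

def mOm (Ω : Set E3) : Measure E3 := MeasureTheory.volume.restrict Ω

def mN (Ω : Set E3) (n : ℕ) : Measure (Fin n → E3) := Measure.pi fun _ => mOm Ω

def ip2 (Ω : Set E3) (f g : E3 → ℂ) : ℂ := ∫ x, f x * conj (g x) ∂ (mOm Ω)

def ipN (Ω : Set E3) (n : ℕ) (f g : (Fin n → E3) → ℂ) : ℂ :=
  ∫ x, f x * conj (g x) ∂ (mN Ω n)

def slater (n : ℕ) (φ : Fin n → E3 → ℂ) : (Fin n → E3) → ℂ := fun x =>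
  ((Real.sqrt (Nat.factorial n) : ℂ))⁻¹ * Matrix.det (Matrix.of fun i j : Fin n => φ i (x j))

def SigmaNK (N K : ℕ) : Type := {s : Finset (Fin K) // s.card = N}

instance (N K : ℕ) : Fintype (SigmaNK N K) :=
  inferInstanceAs (Fintype {s : Finset (Fin K) // s.card = N})

instance (N K : ℕ) : DecidableEq (SigmaNK N K) :=
  inferInstanceAs (DecidableEq {s : Finset (Fin K) // s.card = N})

def embOf {N K : ℕ} (σ : SigmaNK N K) : Fin N → Fin K := fun i => σ.1.orderEmbOfFin σ.2 i

def slaterSel (N K : ℕ) (Φ : Fin K → E3 → ℂ) (σ : SigmaNK N K) : (Fin N → E3) → ℂ :=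
  slater N fun i => Φ (embOf σ i)

def mc (N K : ℕ) (C : SigmaNK N K → ℂ) (Φ : Fin K → E3 → ℂ) : (Fin N → E3) → ℂ :=
  fun x => ∑ σ : SigmaNK N K, C σ * slaterSel N K Φ σ x

def posIn {K : ℕ} (s : Finset (Fin K)) (i : Fin K) : ℕ :=
  (Finset.sort s (· ≤ ·)).idxOf i

def gamma1 (N K : ℕ) (C : SigmaNK N K → ℂ) (i j : Fin K) : ℂ :=
  ∑ σ : SigmaNK N K, ∑ τ : SigmaNK N K,
    if i ∈ σ.1 ∧ j ∈ τ.1 ∧ σ.1.erase i = τ.1.erase j then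
      (-1 : ℂ) ^ (posIn σ.1 i + posIn τ.1 j) * C σ * conj (C τ)
    else 0

def sgn2 {K : ℕ} (s : Finset (Fin K)) (i j : Fin K) : ℂ :=
  (if i = j then 0 else if j < i then 1 else -1) *
    (-1 : ℂ) ^ (posIn s i + posIn s j)

def gamma2 (N K : ℕ) (C : SigmaNK N K → ℂ) (i j k l : Fin K) : ℂ :=
  (1 / 2 : ℂ) * ∑ σ : SigmaNK N K, ∑ τ : SigmaNK N K,
    if i ∈ σ.1 ∧ j ∈ σ.1 ∧ k ∈ τ.1 ∧ l ∈ τ.1 ∧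
        (σ.1.erase i).erase j = (τ.1.erase k).erase l then
      sgn2 σ.1 i j * sgn2 τ.1 k l * C σ * conj (C τ)
    else 0

def GammaM (N K : ℕ) (C : SigmaNK N K → ℂ) : Matrix (Fin K) (Fin K) ℂ :=
  Matrix.of fun i j => conj (gamma1 N K C i j)

def OrthoSys (Ω : Set E3) {K : ℕ} (Φ : Fin K → E3 → ℂ) : Prop :=
  (∀ k, MemLp (Φ k) 2 (mOm Ω)) ∧
  ∀ i j, ip2 Ω (Φ i) (Φ j) = if i = j then 1 else 0

def dPhi (Ω : Set E3) (n : ℕ) (Ξ : (Fin n → E3) → ℂ) (φ ζ : E3 → ℂ) :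
    (Fin n → E3) → ℂ := fun x =>
  ∑ i : Fin n, ζ (x i) * ∫ y, Ξ (Function.update x i y) * conj (φ y) ∂ (mOm Ω)

def gammaFun (Ω : Set E3) (N : ℕ) (Ψ : (Fin (N+1) → E3) → ℂ) (f : E3 → ℂ) : E3 → ℂ :=
  fun x => ((N : ℂ) + 1) *
    ∫ y, (∫ Z, Ψ (Fin.cons x Z) * conj (Ψ (Fin.cons y Z)) ∂ (mN Ω N)) * f y ∂ (mOm Ω)

section Aux
variable {Ω : Set E3}

/-- Type synonym for `E3` carrying the restricted measure as `volume`. -/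
def ES (Ω : Set E3) : Type := E3

instance : MeasurableSpace (ES Ω) := inferInstanceAs (MeasurableSpace E3)

instance : MeasureSpace (ES Ω) := ⟨mOm Ω⟩

instance : SigmaFinite (volume : Measure (ES Ω)) :=
  inferInstanceAs (SigmaFinite ((volume : Measure E3).restrict Ω))

lemma mN_eq_volume (n : ℕ) :
    mN Ω n = (volume : Measure (Fin n → ES Ω)) := by
  rw [MeasureTheory.volume_pi]; rfl

lemma integrable_pi_prod {n : ℕ} (f : Fin n → E3 → ℂ)
    (hf : ∀ i, Integrable (f i) (mOm Ω)) :
    Integrable (fun Z : Fin n → E3 => ∏ i, f i (Z i)) (mN Ω n) := by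
  rw [mN_eq_volume]
  exact Integrable.fintype_prod (f := fun i (x : ES Ω) => f i x) hf

lemma integral_pi_prod {n : ℕ} (f : Fin n → E3 → ℂ) :
    ∫ Z, ∏ i, f i (Z i) ∂(mN Ω n) = ∏ i, ∫ z, f i z ∂(mOm Ω) := by
  rw [mN_eq_volume]
  exact MeasureTheory.integral_fintype_prod_eq_prod (fun i (x : ES Ω) => f i x)

lemma memLp_conj {f : E3 → ℂ} (hf : MemLp f 2 (mOm Ω)) :
    MemLp (fun x => conj (f x)) 2 (mOm Ω) := by
  refine ⟨RCLike.continuous_conj.comp_aestronglyMeasurable hf.1, ?_⟩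
  have : (fun x => conj (f x)) = conj f := rfl
  rw [this, eLpNorm_conj]
  exact hf.2

lemma integrable_mul_conj {f g : E3 → ℂ} (hf : MemLp f 2 (mOm Ω))
    (hg : MemLp g 2 (mOm Ω)) :
    Integrable (fun x => f x * conj (g x)) (mOm Ω) := by
  have h2 : (1 : ℝ≥0∞) / 1 = 1 / 2 + 1 / 2 := by
    rw [ENNReal.div_add_div_same]
    norm_num
    rw [ENNReal.div_self] <;> norm_num
  have := (MemLp.smul (memLp_conj hg) hf : MemLp (f • fun x => conj (g x)) 1 (mOm Ω))
  exact memLp_one_iff_integrable.1 this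

end Aux
section Aux2
variable {Ω : Set E3}
open Equiv Finset

lemma image_comp_perm {n K : ℕ} (a : Fin n → Fin K) (π : Equiv.Perm (Fin n)) :
    Finset.image (a ∘ π) Finset.univ = Finset.image a Finset.univ := by
  ext x
  simp only [Finset.mem_image, Finset.mem_univ, true_and, Function.comp_apply]
  constructor
  · rintro ⟨i, rfl⟩; exact ⟨π i, rfl⟩
  · rintro ⟨i, rfl⟩; exact ⟨π.symm i, by simp⟩

lemma strictMono_eq_of_image_eq {n K : ℕ} {a b : Fin n → Fin K}
    (ha : StrictMono a) (hb : StrictMono b)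
    (h : Finset.image a Finset.univ = Finset.image b Finset.univ) : a = b := by
  have hs : (Finset.image a Finset.univ).card = n := by
    rw [Finset.card_image_of_injective _ ha.injective, Finset.card_univ, Fintype.card_fin]
  have h1 : a = (Finset.image a Finset.univ).orderEmbOfFin hs :=
    Finset.orderEmbOfFin_unique hs (fun x => Finset.mem_image_of_mem _ (Finset.mem_univ x)) ha
  have h2 : b = (Finset.image a Finset.univ).orderEmbOfFin hs :=
    Finset.orderEmbOfFin_unique hs
      (fun x => h ▸ Finset.mem_image_of_mem _ (Finset.mem_univ x)) hb
  rw [h1, h2]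

lemma comp_perm_eq_iff {n K : ℕ} {a b : Fin n → Fin K}
    (ha : StrictMono a) (hb : StrictMono b) (π ρ : Equiv.Perm (Fin n)) :
    a ∘ π = b ∘ ρ ↔ a = b ∧ π = ρ := by
  constructor
  · intro h
    have hab : a = b := by
      apply strictMono_eq_of_image_eq ha hb
      rw [← image_comp_perm a π, ← image_comp_perm b ρ, h]
    refine ⟨hab, ?_⟩
    subst hab
    ext i
    have := congrFun h i
    exact Fin.val_eq_of_eq (ha.injective this)
  · rintro ⟨rfl, rfl⟩; rfl

lemma det_pair_integral {n K : ℕ} {Φ : Fin K → E3 → ℂ} (hΦ : OrthoSys Ω Φ)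
    {a b : Fin n → Fin K} (ha : StrictMono a) (hb : StrictMono b) :
    ∫ Z, Matrix.det (Matrix.of fun i j : Fin n => Φ (a i) (Z j)) *
        conj (Matrix.det (Matrix.of fun i j : Fin n => Φ (b i) (Z j))) ∂(mN Ω n)
      = if a = b then (n.factorial : ℂ) else 0 := by
  have hint : ∀ (π ρ : Equiv.Perm (Fin n)),
      Integrable (fun Z : Fin n → E3 =>
        ∏ j, (Φ (a (π j)) (Z j) * conj (Φ (b (ρ j)) (Z j)))) (mN Ω n) :=
    fun π ρ => integrable_pi_prod _ (fun j => integrable_mul_conj (hΦ.1 _) (hΦ.1 _))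
  have key : (fun Z : Fin n → E3 =>
        Matrix.det (Matrix.of fun i j : Fin n => Φ (a i) (Z j)) *
        conj (Matrix.det (Matrix.of fun i j : Fin n => Φ (b i) (Z j))))
      = fun Z => ∑ π : Equiv.Perm (Fin n), ∑ ρ : Equiv.Perm (Fin n),
          ((Equiv.Perm.sign π : ℤ) : ℂ) * ((Equiv.Perm.sign ρ : ℤ) : ℂ) *
          ∏ j, (Φ (a (π j)) (Z j) * conj (Φ (b (ρ j)) (Z j))) := by
    funext Z
    rw [Matrix.det_apply', Matrix.det_apply', map_sum, Finset.sum_mul_sum]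
    refine Finset.sum_congr rfl fun π _ => Finset.sum_congr rfl fun ρ _ => ?_
    rw [map_mul, map_prod, map_intCast, Finset.prod_mul_distrib]
    simp only [Matrix.of_apply]
    ring
  rw [key, integral_finset_sum _ (fun π _ => integrable_finset_sum _
    (fun ρ _ => ((hint π ρ).const_mul _)))]
  have horto : ∀ i k : Fin K, ∫ z, Φ i z * conj (Φ k z) ∂(mOm Ω)
      = if i = k then (1:ℂ) else 0 := hΦ.2
  have step : ∀ π ρ : Equiv.Perm (Fin n),
      ∫ Z, ((Equiv.Perm.sign π : ℤ) : ℂ) * ((Equiv.Perm.sign ρ : ℤ) : ℂ) *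
          ∏ j, (Φ (a (π j)) (Z j) * conj (Φ (b (ρ j)) (Z j))) ∂(mN Ω n)
      = ((Equiv.Perm.sign π : ℤ) : ℂ) * ((Equiv.Perm.sign ρ : ℤ) : ℂ) *
          (if a = b ∧ π = ρ then 1 else 0) := by
    intro π ρ
    rw [MeasureTheory.integral_const_mul, integral_pi_prod (fun j z => Φ (a (π j)) z * conj (Φ (b (ρ j)) z))]
    congr 1
    have : ∀ j : Fin n, ∫ z, Φ (a (π j)) z * conj (Φ (b (ρ j)) z) ∂(mOm Ω)
        = if a (π j) = b (ρ j) then (1:ℂ) else 0 := fun j => horto _ _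
    rw [Finset.prod_congr rfl (fun j _ => this j), Fintype.prod_boole]
    congr 1
    rw [← comp_perm_eq_iff ha hb π ρ, funext_iff]
    rfl
  simp_rw [integral_finset_sum _ (fun ρ _ => ((hint _ ρ).const_mul _)), step]
  by_cases hab : a = b
  · subst hab
    simp only [true_and, if_pos rfl, mul_ite, mul_one, mul_zero]
    rw [Finset.sum_congr rfl (fun π _ => Finset.sum_ite_eq Finset.univ π
      (fun ρ => ((Equiv.Perm.sign π : ℤ) : ℂ) * ((Equiv.Perm.sign ρ : ℤ) : ℂ)))]
    simp only [Finset.mem_univ, if_true]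
    have : ∀ π : Equiv.Perm (Fin n),
        ((Equiv.Perm.sign π : ℤ) : ℂ) * ((Equiv.Perm.sign π : ℤ) : ℂ) = 1 := by
      intro π
      rw [← Int.cast_mul, ← Units.val_mul, Int.units_mul_self, Units.val_one, Int.cast_one]
    rw [Finset.sum_congr rfl (fun π _ => this π), Finset.sum_const, Finset.card_univ,
      Fintype.card_perm, Fintype.card_fin, nsmul_eq_mul, mul_one]
  · simp [hab]

end Aux2
section Aux3
variable {n K : ℕ}

lemma embOf_strictMono (σ : SigmaNK n K) : StrictMono (embOf σ) :=
  (σ.1.orderEmbOfFin σ.2).strictMono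

lemma embOf_mem (σ : SigmaNK n K) (m : Fin n) : embOf σ m ∈ σ.1 :=
  Finset.orderEmbOfFin_mem _ _ _

lemma posIn_embOf (σ : SigmaNK n K) (m : Fin n) : posIn σ.1 (embOf σ m) = (m : ℕ) := by
  unfold posIn embOf
  rw [Finset.orderEmbOfFin_apply]
  exact List.Nodup.idxOf_getElem (Finset.sort_nodup ..) _ _

lemma exists_embOf_eq (σ : SigmaNK n K) {i : Fin K} (hi : i ∈ σ.1) :
    ∃ m : Fin n, embOf σ m = i := by
  have : (i : Fin K) ∈ Set.range (σ.1.orderEmbOfFin σ.2) := by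
    rw [Finset.range_orderEmbOfFin]; exact hi
  exact this

lemma exists_pair (σ : SigmaNK (n+2) K) {i j : Fin K} (hi : i ∈ σ.1) (hj : j ∈ σ.1)
    (hij : i ≠ j) : ∃ (i' : Fin (n+2)) (j' : Fin (n+1)),
      embOf σ i' = i ∧ embOf σ (i'.succAbove j') = j := by
  obtain ⟨i', rfl⟩ := exists_embOf_eq σ hi
  obtain ⟨m, rfl⟩ := exists_embOf_eq σ hj
  have hmi : m ≠ i' := fun h => hij (by rw [h])
  obtain ⟨j', hj'⟩ := Fin.exists_succAbove_eq hmi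
  exact ⟨i', j', rfl, by rw [hj']⟩

lemma minor_strictMono (σ : SigmaNK (n+2) K) (i' : Fin (n+2)) (j' : Fin (n+1)) :
    StrictMono (fun p : Fin n => embOf σ (i'.succAbove (j'.succAbove p))) :=
  (embOf_strictMono σ).comp ((Fin.strictMono_succAbove i').comp (Fin.strictMono_succAbove j'))

lemma image_minor (σ : SigmaNK (n+2) K) (i' : Fin (n+2)) (j' : Fin (n+1)) :
    Finset.image (fun p : Fin n => embOf σ (i'.succAbove (j'.succAbove p))) Finset.univ
      = (σ.1.erase (embOf σ i')).erase (embOf σ (i'.succAbove j')) := by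
  have hinj := (minor_strictMono σ i' j').injective
  have hsub : Finset.image (fun p : Fin n => embOf σ (i'.succAbove (j'.succAbove p)))
      Finset.univ ⊆ (σ.1.erase (embOf σ i')).erase (embOf σ (i'.succAbove j')) := by
    intro x hx
    obtain ⟨p, _, rfl⟩ := Finset.mem_image.1 hx
    refine Finset.mem_erase.2 ⟨?_, Finset.mem_erase.2 ⟨?_, embOf_mem _ _⟩⟩
    · intro h
      exact Fin.succAbove_ne j' p
        (Fin.succAbove_right_injective ((embOf_strictMono σ).injective h))
    · intro h
      exact Fin.succAbove_ne i' (j'.succAbove p) ((embOf_strictMono σ).injective h)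
  refine Finset.eq_of_subset_of_card_le hsub ?_
  rw [Finset.card_image_of_injective _ hinj, Finset.card_univ, Fintype.card_fin]
  have hmem : embOf σ (i'.succAbove j') ∈ σ.1.erase (embOf σ i') :=
    Finset.mem_erase.2 ⟨fun h => Fin.succAbove_ne i' j'
      ((embOf_strictMono σ).injective h), embOf_mem _ _⟩
  rw [Finset.card_erase_of_mem hmem, Finset.card_erase_of_mem (embOf_mem _ _), σ.2]
  omega

lemma sgn2_embOf (σ : SigmaNK (n+2) K) (i' : Fin (n+2)) (j' : Fin (n+1)) :
    sgn2 σ.1 (embOf σ i') (embOf σ (i'.succAbove j'))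
      = (-1 : ℂ) ^ ((i' : ℕ) + (j' : ℕ)) := by
  unfold sgn2
  rw [posIn_embOf, posIn_embOf]
  have hne : embOf σ i' ≠ embOf σ (i'.succAbove j') :=
    fun h => Fin.succAbove_ne i' j' ((embOf_strictMono σ).injective h).symm
  rcases lt_or_ge (Fin.castSucc j') i' with h | h
  · rw [Fin.succAbove_of_castSucc_lt _ _ h] at hne ⊢
    have hlt : embOf σ (Fin.castSucc j') < embOf σ i' := embOf_strictMono σ h
    rw [if_neg hne, if_pos hlt, one_mul, Fin.coe_castSucc]
  · rw [Fin.succAbove_of_le_castSucc _ _ h] at hne ⊢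
    have hlt : embOf σ i' < embOf σ (Fin.succ j') :=
      embOf_strictMono σ (lt_of_le_of_lt h (Fin.castSucc_lt_succ (i := j')))
    rw [if_neg hne, if_neg (not_lt.2 hlt.le), Fin.val_succ]
    rw [← Nat.add_assoc, pow_succ]
    ring

end Aux3
section Aux4
variable {Ω : Set E3} {n K : ℕ}

lemma det_pair_integrable {Φ : Fin K → E3 → ℂ} (hΦ1 : ∀ k, MemLp (Φ k) 2 (mOm Ω))
    (a b : Fin n → Fin K) :
    Integrable (fun Z : Fin n → E3 =>
      Matrix.det (Matrix.of fun i j : Fin n => Φ (a i) (Z j)) *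
        conj (Matrix.det (Matrix.of fun i j : Fin n => Φ (b i) (Z j)))) (mN Ω n) := by
  have key : (fun Z : Fin n → E3 =>
        Matrix.det (Matrix.of fun i j : Fin n => Φ (a i) (Z j)) *
        conj (Matrix.det (Matrix.of fun i j : Fin n => Φ (b i) (Z j))))
      = fun Z => ∑ π : Equiv.Perm (Fin n), ∑ ρ : Equiv.Perm (Fin n),
          ((Equiv.Perm.sign π : ℤ) : ℂ) * ((Equiv.Perm.sign ρ : ℤ) : ℂ) *
          ∏ j, (Φ (a (π j)) (Z j) * conj (Φ (b (ρ j)) (Z j))) := by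
    funext Z
    rw [Matrix.det_apply', Matrix.det_apply', map_sum, Finset.sum_mul_sum]
    refine Finset.sum_congr rfl fun π _ => Finset.sum_congr rfl fun ρ _ => ?_
    rw [map_mul, map_prod, map_intCast, Finset.prod_mul_distrib]
    simp only [Matrix.of_apply]
    ring
  rw [key]
  exact integrable_finset_sum _ (fun π _ => integrable_finset_sum _ (fun ρ _ =>
    (integrable_pi_prod _ (fun j => integrable_mul_conj (hΦ1 _) (hΦ1 _))).const_mul _))

lemma det_expand_two {m : ℕ} (M : Matrix (Fin (m+2)) (Fin (m+2)) ℂ) :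
    M.det = ∑ i' : Fin (m+2), ∑ j' : Fin (m+1),
      (-1:ℂ)^((i':ℕ)+(j':ℕ)) * M i' 0 * M (i'.succAbove j') 1 *
        (M.submatrix (fun p : Fin m => i'.succAbove (j'.succAbove p))
          (fun q : Fin m => q.succ.succ)).det := by
  rw [Matrix.det_succ_column_zero]
  refine Finset.sum_congr rfl fun i' _ => ?_
  rw [Matrix.det_succ_column_zero, Finset.mul_sum]
  refine Finset.sum_congr rfl fun j' _ => ?_
  simp only [Matrix.submatrix_apply, Matrix.submatrix_submatrix, Function.comp_def,
    Fin.succ_zero_eq_one, pow_add]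
  ring

lemma slater_cons_expand (Φ : Fin K → E3 → ℂ) (σ : SigmaNK (n+2) K) (x y : E3)
    (Z : Fin n → E3) :
    slaterSel (n+2) K Φ σ (Fin.cons x (Fin.cons y Z))
      = ((Real.sqrt (Nat.factorial (n+2)) : ℂ))⁻¹ *
        ∑ i' : Fin (n+2), ∑ j' : Fin (n+1),
          (-1:ℂ)^((i':ℕ)+(j':ℕ)) * Φ (embOf σ i') x * Φ (embOf σ (i'.succAbove j')) y *
            Matrix.det (Matrix.of fun p q : Fin n =>
              Φ (embOf σ (i'.succAbove (j'.succAbove p))) (Z q)) := by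
  unfold slaterSel slater
  congr 1
  rw [det_expand_two]
  refine Finset.sum_congr rfl fun i' _ => Finset.sum_congr rfl fun j' _ => ?_
  simp only [Matrix.submatrix_apply, Matrix.of_apply, Fin.cons_succ, Fin.cons_zero,
    show (1 : Fin (n+2)) = Fin.succ 0 from rfl]
  congr 1

end Aux4
section Aux5
variable {Ω : Set E3} {n K : ℕ}

lemma slater_pair_expand (Φ : Fin K → E3 → ℂ) (σ τ : SigmaNK (n+2) K) (x y x' y' : E3) :
    (fun Z : Fin n → E3 => slaterSel (n+2) K Φ σ (Fin.cons x (Fin.cons y Z)) *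
        conj (slaterSel (n+2) K Φ τ (Fin.cons x' (Fin.cons y' Z))))
    = fun Z => ((Nat.factorial (n+2) : ℂ))⁻¹ *
        ∑ i' : Fin (n+2), ∑ k' : Fin (n+2), ∑ j' : Fin (n+1), ∑ l' : Fin (n+1),
          ((-1:ℂ)^((i':ℕ)+(j':ℕ)) * (-1:ℂ)^((k':ℕ)+(l':ℕ)) *
            Φ (embOf σ i') x * Φ (embOf σ (i'.succAbove j')) y *
            conj (Φ (embOf τ k') x') * conj (Φ (embOf τ (k'.succAbove l')) y')) *
          (Matrix.det (Matrix.of fun p q : Fin n =>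
              Φ (embOf σ (i'.succAbove (j'.succAbove p))) (Z q)) *
           conj (Matrix.det (Matrix.of fun p q : Fin n =>
              Φ (embOf τ (k'.succAbove (l'.succAbove p))) (Z q)))) := by
  funext Z
  rw [slater_cons_expand, slater_cons_expand, map_mul]
  simp only [map_sum, map_mul, map_pow, map_neg, map_one, map_inv₀, Complex.conj_ofReal]
  rw [mul_mul_mul_comm]
  congr 1
  · rw [← mul_inv, ← Complex.ofReal_mul, Real.mul_self_sqrt (by positivity),
      Complex.ofReal_natCast]
  · rw [Finset.sum_mul_sum]
    refine Finset.sum_congr rfl fun i' _ => Finset.sum_congr rfl fun k' _ => ?_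
    rw [Finset.sum_mul_sum]
    refine Finset.sum_congr rfl fun j' _ => Finset.sum_congr rfl fun l' _ => ?_
    ring

lemma integral_sum4 {A B C D : Type*} [Fintype A] [Fintype B] [Fintype C] [Fintype D]
    {μ : Measure (Fin n → E3)} (f : A → B → C → D → (Fin n → E3) → ℂ)
    (hf : ∀ a b c d, Integrable (f a b c d) μ) :
    ∫ Z, (∑ a, ∑ b, ∑ c, ∑ d, f a b c d Z) ∂μ
      = ∑ a, ∑ b, ∑ c, ∑ d, ∫ Z, f a b c d Z ∂μ := by
  rw [integral_finset_sum _ (fun a _ => integrable_finset_sum _ (fun b _ =>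
    integrable_finset_sum _ (fun c _ => integrable_finset_sum _ (fun d _ => hf a b c d))))]
  refine Finset.sum_congr rfl fun a _ => ?_
  rw [integral_finset_sum _ (fun b _ =>
    integrable_finset_sum _ (fun c _ => integrable_finset_sum _ (fun d _ => hf a b c d)))]
  refine Finset.sum_congr rfl fun b _ => ?_
  rw [integral_finset_sum _ (fun c _ => integrable_finset_sum _ (fun d _ => hf a b c d))]
  refine Finset.sum_congr rfl fun c _ => ?_
  rw [integral_finset_sum _ (fun d _ => hf a b c d)]

lemma sum_in4 {A I J L M : Type*} [Fintype A] [Fintype I] [Fintype J] [Fintype L] [Fintype M]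
    (f : A → I → J → L → M → ℂ) :
    ∑ a : A, ∑ i : I, ∑ j : J, ∑ k : L, ∑ l : M, f a i j k l
      = ∑ i : I, ∑ j : J, ∑ k : L, ∑ l : M, ∑ a : A, f a i j k l := by
  rw [Finset.sum_comm]
  refine Finset.sum_congr rfl fun i _ => ?_
  rw [Finset.sum_comm]
  refine Finset.sum_congr rfl fun j _ => ?_
  rw [Finset.sum_comm]
  refine Finset.sum_congr rfl fun k _ => ?_
  rw [Finset.sum_comm]

lemma single_reindex (σ : SigmaNK (n+2) K) (g1 g2 : Fin K → ℂ) (W : Finset (Fin K) → ℂ) :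
    ∑ i' : Fin (n+2), ∑ j' : Fin (n+1),
      (-1:ℂ)^((i':ℕ)+(j':ℕ)) * g1 (embOf σ i') * g2 (embOf σ (i'.succAbove j')) *
        W ((σ.1.erase (embOf σ i')).erase (embOf σ (i'.succAbove j')))
    = ∑ i : Fin K, ∑ j : Fin K,
      (if i ∈ σ.1 ∧ j ∈ σ.1 then sgn2 σ.1 i j else 0) * g1 i * g2 j *
        W ((σ.1.erase i).erase j) := by
  rw [← Finset.sum_product', ← Finset.sum_product']
  refine Finset.sum_of_injOn
    (fun q : Fin (n+2) × Fin (n+1) => (embOf σ q.1, embOf σ (q.1.succAbove q.2)))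
    ?_ ?_ ?_ ?_
  · intro q1 _ q2 _ h
    simp only [Prod.mk.injEq] at h
    have h1 : q1.1 = q2.1 := (embOf_strictMono σ).injective h.1
    have h2 : q1.2 = q2.2 := by
      have := (embOf_strictMono σ).injective h.2
      rw [h1] at this
      exact Fin.succAbove_right_injective this
    exact Prod.ext h1 h2
  · intro q _
    simp
  · rintro ⟨i, j⟩ _ hnot
    by_cases hij : i ∈ σ.1 ∧ j ∈ σ.1
    · rcases eq_or_ne i j with rfl | hne
      · simp [sgn2]
      · exfalso
        obtain ⟨i', j', h1, h2⟩ := exists_pair σ hij.1 hij.2 hne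
        exact hnot ⟨(i', j'), by simp, by simp [h1, h2]⟩
    · rw [if_neg hij]
      simp
  · rintro ⟨i', j'⟩ _
    rw [if_pos ⟨embOf_mem _ _, embOf_mem _ _⟩, sgn2_embOf]

end Aux5
section Aux6
variable {Ω : Set E3} {n K : ℕ}

lemma minor_cond (σ τ : SigmaNK (n+2) K) (i' k' : Fin (n+2)) (j' l' : Fin (n+1)) :
    ((fun p : Fin n => embOf σ (i'.succAbove (j'.succAbove p)))
        = (fun p => embOf τ (k'.succAbove (l'.succAbove p))))
      ↔ ((σ.1.erase (embOf σ i')).erase (embOf σ (i'.succAbove j'))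
        = (τ.1.erase (embOf τ k')).erase (embOf τ (k'.succAbove l'))) := by
  constructor
  · intro h
    rw [← image_minor σ i' j', ← image_minor τ k' l']
    exact congrArg (fun f => Finset.image f Finset.univ) h
  · intro h
    exact strictMono_eq_of_image_eq (minor_strictMono σ i' j') (minor_strictMono τ k' l')
      (by rw [image_minor, image_minor, h])

set_option maxHeartbeats 1000000 in
lemma pair_integral {Φ : Fin K → E3 → ℂ} (hΦ : OrthoSys Ω Φ)
    (σ τ : SigmaNK (n+2) K) (x y x' y' : E3) :
    ∫ Z, slaterSel (n+2) K Φ σ (Fin.cons x (Fin.cons y Z)) *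
        conj (slaterSel (n+2) K Φ τ (Fin.cons x' (Fin.cons y' Z))) ∂(mN Ω n)
    = ((Nat.factorial (n+2) : ℂ))⁻¹ * (Nat.factorial n : ℂ) *
      ∑ i : Fin K, ∑ j : Fin K, ∑ k : Fin K, ∑ l : Fin K,
        (if i ∈ σ.1 ∧ j ∈ σ.1 ∧ k ∈ τ.1 ∧ l ∈ τ.1 ∧
            (σ.1.erase i).erase j = (τ.1.erase k).erase l then
          sgn2 σ.1 i j * sgn2 τ.1 k l else 0) *
        (Φ i x * Φ j y * conj (Φ k x') * conj (Φ l y')) := by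
  set Wσ : Finset (Fin K) → ℂ := fun s =>
    ∑ k' : Fin (n+2), ∑ l' : Fin (n+1),
      (-1:ℂ)^((k':ℕ)+(l':ℕ)) * conj (Φ (embOf τ k') x') *
        conj (Φ (embOf τ (k'.succAbove l')) y') *
        (if s = (τ.1.erase (embOf τ k')).erase (embOf τ (k'.succAbove l'))
          then (Nat.factorial n : ℂ) else 0) with hWσ
  rw [slater_pair_expand Φ σ τ x y x' y', MeasureTheory.integral_const_mul]
  rw [integral_sum4 _ (fun i' k' j' l' => (det_pair_integrable hΦ.1 _ _).const_mul _)]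
  rw [mul_assoc]
  congr 1
  have heval : ∀ (i' k' : Fin (n+2)) (j' l' : Fin (n+1)),
      ∫ Z, ((-1:ℂ)^((i':ℕ)+(j':ℕ)) * (-1:ℂ)^((k':ℕ)+(l':ℕ)) *
            Φ (embOf σ i') x * Φ (embOf σ (i'.succAbove j')) y *
            conj (Φ (embOf τ k') x') * conj (Φ (embOf τ (k'.succAbove l')) y')) *
          (Matrix.det (Matrix.of fun p q : Fin n =>
              Φ (embOf σ (i'.succAbove (j'.succAbove p))) (Z q)) *
           conj (Matrix.det (Matrix.of fun p q : Fin n =>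
              Φ (embOf τ (k'.succAbove (l'.succAbove p))) (Z q)))) ∂(mN Ω n)
      = ((-1:ℂ)^((i':ℕ)+(j':ℕ)) *
          Φ (embOf σ i') x * Φ (embOf σ (i'.succAbove j')) y *
            ((-1:ℂ)^((k':ℕ)+(l':ℕ)) * conj (Φ (embOf τ k') x') *
              conj (Φ (embOf τ (k'.succAbove l')) y') *
              (if (σ.1.erase (embOf σ i')).erase (embOf σ (i'.succAbove j'))
                  = (τ.1.erase (embOf τ k')).erase (embOf τ (k'.succAbove l'))
                then (Nat.factorial n : ℂ) else 0))) := by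
    intro i' k' j' l'
    rw [MeasureTheory.integral_const_mul,
      det_pair_integral hΦ (minor_strictMono σ i' j') (minor_strictMono τ k' l')]
    rw [if_congr (minor_cond σ τ i' k' j' l') rfl rfl]
    ring
  have step1 : (∑ i' : Fin (n+2), ∑ k' : Fin (n+2), ∑ j' : Fin (n+1), ∑ l' : Fin (n+1),
        ∫ Z, ((-1:ℂ)^((i':ℕ)+(j':ℕ)) * (-1:ℂ)^((k':ℕ)+(l':ℕ)) *
            Φ (embOf σ i') x * Φ (embOf σ (i'.succAbove j')) y *
            conj (Φ (embOf τ k') x') * conj (Φ (embOf τ (k'.succAbove l')) y')) *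
          (Matrix.det (Matrix.of fun p q : Fin n =>
              Φ (embOf σ (i'.succAbove (j'.succAbove p))) (Z q)) *
           conj (Matrix.det (Matrix.of fun p q : Fin n =>
              Φ (embOf τ (k'.succAbove (l'.succAbove p))) (Z q)))) ∂(mN Ω n))
      = ∑ i' : Fin (n+2), ∑ j' : Fin (n+1),
          (-1:ℂ)^((i':ℕ)+(j':ℕ)) * Φ (embOf σ i') x * Φ (embOf σ (i'.succAbove j')) y *
            Wσ ((σ.1.erase (embOf σ i')).erase (embOf σ (i'.succAbove j'))) := by
    refine Finset.sum_congr rfl fun i' _ => ?_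
    rw [Finset.sum_comm]
    refine Finset.sum_congr rfl fun j' _ => ?_
    rw [hWσ]
    simp only []
    rw [Finset.mul_sum]
    refine Finset.sum_congr rfl fun k' _ => ?_
    rw [Finset.mul_sum]
    refine Finset.sum_congr rfl fun l' _ => ?_
    rw [heval i' k' j' l']
  rw [step1]
  refine Eq.trans (single_reindex σ (fun i => Φ i x) (fun j => Φ j y) Wσ) ?_
  simp_rw [Finset.mul_sum]
  refine Finset.sum_congr rfl fun i _ => Finset.sum_congr rfl fun j _ => ?_
  rw [show Wσ ((σ.1.erase i).erase j)
      = ∑ k : Fin K, ∑ l : Fin K,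
          (if k ∈ τ.1 ∧ l ∈ τ.1 then sgn2 τ.1 k l else 0) * conj (Φ k x') * conj (Φ l y') *
            (if (σ.1.erase i).erase j = (τ.1.erase k).erase l then (Nat.factorial n : ℂ) else 0)
    from single_reindex τ (fun k => conj (Φ k x')) (fun l => conj (Φ l y'))
      (fun t => if (σ.1.erase i).erase j = t then (Nat.factorial n : ℂ) else 0)]
  rw [Finset.mul_sum]
  refine Finset.sum_congr rfl fun k _ => ?_
  rw [Finset.mul_sum]
  refine Finset.sum_congr rfl fun l _ => ?_
  split_ifs <;> first | (exfalso; tauto) | ring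

end Aux6

set_option maxHeartbeats 2000000 in
/-- the kernel of the second-order density matrix of Ψ = π(C,Φ)
(with N+2 particles, so the particle number is ≥ 2) equals
Σ_{i,j,k,l} γ_ijkl(C) φ_i(x) φ_j(y) conj(φ_k(x')) conj(φ_l(y')) for a.e. (x,y,x',y') ∈ Ω⁴. -/
theorem second_order_density_kernel (Ω : Set E3) (hΩ : IsOpen Ω) (N K : ℕ)
    (hNK : N + 2 ≤ K)
    (C : SigmaNK (N+2) K → ℂ) (hC : ∑ σ : SigmaNK (N+2) K, ‖C σ‖ ^ 2 = 1)
    (Φ : Fin K → E3 → ℂ) (hΦ : OrthoSys Ω Φ) :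
    (fun p : (E3 × E3) × (E3 × E3) =>
        ((Nat.choose (N+2) 2 : ℕ) : ℂ) *
          ∫ Z, mc (N+2) K C Φ (Fin.cons p.1.1 (Fin.cons p.1.2 Z)) *
              conj (mc (N+2) K C Φ (Fin.cons p.2.1 (Fin.cons p.2.2 Z)))
            ∂ (mN Ω N))
      =ᵐ[((mOm Ω).prod (mOm Ω)).prod ((mOm Ω).prod (mOm Ω))]
      fun p : (E3 × E3) × (E3 × E3) =>
        ∑ i : Fin K, ∑ j : Fin K, ∑ k : Fin K, ∑ l : Fin K,
          gamma2 (N+2) K C i j k l * Φ i p.1.1 * Φ j p.1.2 *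
            conj (Φ k p.2.1) * conj (Φ l p.2.2) := by
  refine Filter.Eventually.of_forall ?_
  rintro ⟨⟨x, y⟩, x', y'⟩
  simp only []
  have hh : ((Nat.choose (N+2) 2 : ℕ) : ℂ) * (((N+2).factorial : ℂ)⁻¹ * ((N).factorial : ℂ))
      = 1/2 := by
    have hnat : (N+2).choose 2 * 2 * N.factorial = (N+2).factorial := by
      have h := Nat.choose_mul_factorial_mul_factorial (show 2 ≤ N+2 by omega)
      simpa [Nat.factorial] using h
    have hfac0 : (((N+2).factorial : ℕ) : ℂ) ≠ 0 := Nat.cast_ne_zero.2 (Nat.factorial_ne_zero _)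
    have hℂ : ((Nat.choose (N+2) 2 : ℕ) : ℂ) * 2 * ((N).factorial : ℂ)
        = ((N+2).factorial : ℂ) := by
      exact_mod_cast congrArg (Nat.cast : ℕ → ℂ) hnat
    field_simp
    linear_combination hℂ
  have hmc : (fun Z : Fin N → E3 => mc (N+2) K C Φ (Fin.cons x (Fin.cons y Z)) *
        conj (mc (N+2) K C Φ (Fin.cons x' (Fin.cons y' Z))))
      = fun Z => ∑ σ : SigmaNK (N+2) K, ∑ τ : SigmaNK (N+2) K,
          (C σ * conj (C τ)) *
          (slaterSel (N+2) K Φ σ (Fin.cons x (Fin.cons y Z)) *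
            conj (slaterSel (N+2) K Φ τ (Fin.cons x' (Fin.cons y' Z)))) := by
    funext Z
    unfold mc
    rw [map_sum, Finset.sum_mul_sum]
    refine Finset.sum_congr rfl fun σ _ => Finset.sum_congr rfl fun τ _ => ?_
    rw [map_mul]
    ring
  have hsl : ∀ σ τ : SigmaNK (N+2) K,
      Integrable (fun Z : Fin N → E3 =>
        slaterSel (N+2) K Φ σ (Fin.cons x (Fin.cons y Z)) *
          conj (slaterSel (N+2) K Φ τ (Fin.cons x' (Fin.cons y' Z)))) (mN Ω N) := by
    intro σ τ
    rw [slater_pair_expand]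
    exact (integrable_finset_sum _ (fun i' _ => integrable_finset_sum _ (fun k' _ =>
      integrable_finset_sum _ (fun j' _ => integrable_finset_sum _ (fun l' _ =>
        (det_pair_integrable hΦ.1 _ _).const_mul _))))).const_mul _
  rw [hmc, integral_finset_sum _ (fun σ _ => integrable_finset_sum _
    (fun τ _ => (hsl σ τ).const_mul _))]
  rw [Finset.sum_congr rfl (fun σ _ => integral_finset_sum _
    (fun τ _ => (hsl σ τ).const_mul _))]
  have hstep : ∀ σ τ : SigmaNK (N+2) K,
      ∫ Z, (C σ * conj (C τ)) *
          (slaterSel (N+2) K Φ σ (Fin.cons x (Fin.cons y Z)) *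
            conj (slaterSel (N+2) K Φ τ (Fin.cons x' (Fin.cons y' Z)))) ∂(mN Ω N)
      = (C σ * conj (C τ)) *
          ((((N+2).factorial : ℂ))⁻¹ * ((N).factorial : ℂ) *
            ∑ i : Fin K, ∑ j : Fin K, ∑ k : Fin K, ∑ l : Fin K,
              (if i ∈ σ.1 ∧ j ∈ σ.1 ∧ k ∈ τ.1 ∧ l ∈ τ.1 ∧
                  (σ.1.erase i).erase j = (τ.1.erase k).erase l then
                sgn2 σ.1 i j * sgn2 τ.1 k l else 0) *
              (Φ i x * Φ j y * conj (Φ k x') * conj (Φ l y'))) := by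
    intro σ τ
    rw [MeasureTheory.integral_const_mul, pair_integral hΦ σ τ x y x' y']
  rw [Finset.sum_congr rfl (fun σ _ => Finset.sum_congr rfl (fun τ _ => hstep σ τ))]
  have hscal : ∀ (cc S : ℂ), ((Nat.choose (N+2) 2 : ℕ) : ℂ) *
      (cc * ((((N+2).factorial : ℂ))⁻¹ * ((N).factorial : ℂ) * S)) = (1/2 * cc) * S := by
    intro cc S
    rw [← hh]
    ring
  -- move the constant inside and normalize each term
  have lhsT : ((Nat.choose (N+2) 2 : ℕ) : ℂ) *
      (∑ σ : SigmaNK (N+2) K, ∑ τ : SigmaNK (N+2) K, (C σ * conj (C τ)) *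
          ((((N+2).factorial : ℂ))⁻¹ * ((N).factorial : ℂ) *
            ∑ i : Fin K, ∑ j : Fin K, ∑ k : Fin K, ∑ l : Fin K,
              (if i ∈ σ.1 ∧ j ∈ σ.1 ∧ k ∈ τ.1 ∧ l ∈ τ.1 ∧
                  (σ.1.erase i).erase j = (τ.1.erase k).erase l then
                sgn2 σ.1 i j * sgn2 τ.1 k l else 0) *
              (Φ i x * Φ j y * conj (Φ k x') * conj (Φ l y'))))
      = ∑ σ : SigmaNK (N+2) K, ∑ τ : SigmaNK (N+2) K,
          ∑ i : Fin K, ∑ j : Fin K, ∑ k : Fin K, ∑ l : Fin K,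
          (1/2 : ℂ) * (if i ∈ σ.1 ∧ j ∈ σ.1 ∧ k ∈ τ.1 ∧ l ∈ τ.1 ∧
              (σ.1.erase i).erase j = (τ.1.erase k).erase l then
            sgn2 σ.1 i j * sgn2 τ.1 k l else 0) * (C σ * conj (C τ)) *
          (Φ i x * Φ j y * conj (Φ k x') * conj (Φ l y')) := by
    rw [Finset.mul_sum]
    refine Finset.sum_congr rfl fun σ _ => ?_
    rw [Finset.mul_sum]
    refine Finset.sum_congr rfl fun τ _ => ?_
    rw [hscal]
    simp_rw [Finset.mul_sum]
    refine Finset.sum_congr rfl fun i _ => Finset.sum_congr rfl fun j _ =>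
      Finset.sum_congr rfl fun k _ => Finset.sum_congr rfl fun l _ => ?_
    ring
  rw [lhsT]
  -- now reorder sums on the left and compare with the RHS
  rw [Finset.sum_congr rfl (fun σ _ => sum_in4 (fun τ i j k l =>
      (1/2 : ℂ) * (if i ∈ σ.1 ∧ j ∈ σ.1 ∧ k ∈ τ.1 ∧ l ∈ τ.1 ∧
          (σ.1.erase i).erase j = (τ.1.erase k).erase l then
        sgn2 σ.1 i j * sgn2 τ.1 k l else 0) * (C σ * conj (C τ)) *
      (Φ i x * Φ j y * conj (Φ k x') * conj (Φ l y'))))]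
  rw [sum_in4 (fun σ i j k l => ∑ τ : SigmaNK (N+2) K,
      (1/2 : ℂ) * (if i ∈ σ.1 ∧ j ∈ σ.1 ∧ k ∈ τ.1 ∧ l ∈ τ.1 ∧
          (σ.1.erase i).erase j = (τ.1.erase k).erase l then
        sgn2 σ.1 i j * sgn2 τ.1 k l else 0) * (C σ * conj (C τ)) *
      (Φ i x * Φ j y * conj (Φ k x') * conj (Φ l y')))]
  refine Finset.sum_congr rfl fun i _ => Finset.sum_congr rfl fun j _ =>
    Finset.sum_congr rfl fun k _ => Finset.sum_congr rfl fun l _ => ?_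
  trans ((∑ σ : SigmaNK (N+2) K, ∑ τ : SigmaNK (N+2) K,
      (if i ∈ σ.1 ∧ j ∈ σ.1 ∧ k ∈ τ.1 ∧ l ∈ τ.1 ∧
          (σ.1.erase i).erase j = (τ.1.erase k).erase l then
        sgn2 σ.1 i j * sgn2 τ.1 k l * C σ * conj (C τ) else 0)) *
    ((1/2 : ℂ) * (Φ i x * Φ j y * conj (Φ k x') * conj (Φ l y'))))
  · rw [Finset.sum_mul]
    refine Finset.sum_congr rfl fun σ _ => ?_
    rw [Finset.sum_mul]
    refine Finset.sum_congr rfl fun τ _ => ?_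
    split_ifs <;> ring
  · unfold gamma2
    ring
end
end

section
/- For every C ∈ ℂ^r with Euclidean norm 1, the K×K matrix Γ(C) is Hermitian; its diagonal entries satisfy Γ(C)_{ii} = Σ_{σ∈Σ_{N,K}, i∈σ} |c_σ|² (in particular 0 ≤ Γ(C)_{ii} ≤ 1); its trace equals N; and both Γ(C) and I − Γ(C) are positive semidefinite. -/
open MeasureTheory Complex
open scoped BigOperators ComplexConjugate ENNReal ComplexOrder

noncomputable section

section Aux
open Finset

lemma indexOf_sorted_lt {K : ℕ} {l : List (Fin K)} (hl : l.Pairwise (· < ·)) {i : Fin K}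
    (h : i ∈ l) : l.idxOf i = (l.filter (fun k => k < i)).length := by
  induction l with
  | nil => simp at h
  | cons a t ih =>
    rw [List.pairwise_cons] at hl
    by_cases hia : i = a
    · subst hia
      rw [List.idxOf_cons_self]
      have hn : ∀ k ∈ i :: t, ¬ (k < i) := by
        intro k hk
        rcases List.mem_cons.1 hk with rfl | hk
        · exact lt_irrefl _
        · exact fun h' => absurd h' (not_lt.2 (hl.1 k hk).le)
      rw [List.filter_eq_nil_iff.2 (by intro k hk; simpa using hn k hk)]
      rfl
    · have hit : i ∈ t := by
        rcases List.mem_cons.1 h with rfl | h; · exact absurd rfl hia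
        · exact h
      have hai : a < i := hl.1 i hit
      rw [List.idxOf_cons_ne _ (by exact fun h' => hia h'.symm), ih hl.2 hit,
        List.filter_cons_of_pos (by simpa using hai)]
      simp


lemma posIn_eq_card_filter {K : ℕ} (s : Finset (Fin K)) (i : Fin K) (h : i ∈ s) :
    posIn s i = (s.filter (fun k => k < i)).card := by
  unfold posIn
  rw [indexOf_sorted_lt (Finset.sortedLT_sort s).pairwise ((Finset.mem_sort _).2 h)]
  have hp := (Finset.sort_perm_toList (s := s) (r := (· ≤ ·))).filter (fun k => decide (k < i))
  rw [hp.length_eq, ← Multiset.coe_card, ← Multiset.filter_coe, Finset.coe_toList]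
  rfl


lemma posIn_insert {K : ℕ} (ρ : Finset (Fin K)) (i : Fin K) (h : i ∉ ρ) :
    posIn (insert i ρ) i = (ρ.filter (fun k => k < i)).card := by
  rw [posIn_eq_card_filter _ _ (Finset.mem_insert_self i ρ), Finset.filter_insert,
    if_neg (lt_irrefl i)]


lemma sign_flip {K : ℕ} (ρ : Finset (Fin K)) {i j : Fin K} (hij : i ≠ j)
    (hi : i ∉ ρ) (hj : j ∉ ρ) :
    ((-1 : ℂ) ^ (posIn (insert i (insert j ρ)) i + posIn (insert i (insert j ρ)) j))
      = -((-1 : ℂ) ^ (posIn (insert i ρ) i) * (-1 : ℂ) ^ (posIn (insert j ρ) j)) := by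
  have hi' : i ∉ insert j ρ := by simp [hij, hi]
  have hj' : j ∈ insert i (insert j ρ) := by simp
  have h1 : posIn (insert i (insert j ρ)) i
      = (ρ.filter (fun k => k < i)).card + (if j < i then 1 else 0) := by
    rw [posIn_insert _ _ hi', Finset.filter_insert]
    by_cases h : j < i
    · rw [if_pos h, Finset.card_insert_of_notMem (by simp [Finset.mem_filter, hj]), if_pos h]
    · rw [if_neg h, if_neg h]; omega
  have h2 : posIn (insert i (insert j ρ)) j
      = (ρ.filter (fun k => k < j)).card + (if i < j then 1 else 0) := by
    have : insert i (insert j ρ) = insert j (insert i ρ) := by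
      ext k; simp [Finset.mem_insert]; tauto
    rw [this, posIn_insert _ _ (by simp [Ne.symm hij, hj]), Finset.filter_insert]
    by_cases h : i < j
    · rw [if_pos h, Finset.card_insert_of_notMem (by simp [Finset.mem_filter, hi]), if_pos h]
    · rw [if_neg h, if_neg h]; omega
  rw [h1, h2, posIn_insert _ _ hi, posIn_insert _ _ hj, ← pow_add]
  have hone : (if j < i then 1 else 0) + (if i < j then 1 else 0) = 1 := by
    rcases lt_or_gt_of_ne hij with h | h
    · rw [if_neg (asymm h), if_pos h]
    · rw [if_pos h, if_neg (asymm h)]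
  have : (ρ.filter (fun k => k < i)).card + (if j < i then 1 else 0)
      + ((ρ.filter (fun k => k < j)).card + (if i < j then 1 else 0))
      = ((ρ.filter (fun k => k < i)).card + (ρ.filter (fun k => k < j)).card) + 1 := by omega
  rw [this, pow_succ]
  ring


lemma sum_insert_reindex {K m : ℕ} {M : Type*} [AddCommMonoid M] (i : Fin K)
    (f : Finset (Fin K) → M) :
    ∑ s ∈ Finset.powersetCard (m+1) Finset.univ, (if i ∈ s then f s else 0)
      = ∑ ρ ∈ Finset.powersetCard m Finset.univ, (if i ∉ ρ then f (insert i ρ) else 0) := by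
  rw [← Finset.sum_filter, ← Finset.sum_filter]
  refine Finset.sum_nbij' (fun s => s.erase i) (fun ρ => insert i ρ) ?_ ?_ ?_ ?_ ?_
  · intro s hs
    simp only [Finset.mem_filter, Finset.mem_powersetCard_univ] at hs ⊢
    exact ⟨by rw [Finset.card_erase_of_mem hs.2, hs.1]; rfl, Finset.notMem_erase i s⟩
  · intro ρ hρ
    simp only [Finset.mem_filter, Finset.mem_powersetCard_univ] at hρ ⊢
    exact ⟨by rw [Finset.card_insert_of_notMem hρ.2, hρ.1], Finset.mem_insert_self i ρ⟩
  · intro s hs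
    simp only [Finset.mem_filter] at hs
    exact Finset.insert_erase hs.2
  · intro ρ hρ
    simp only [Finset.mem_filter] at hρ
    exact Finset.erase_insert hρ.2
  · intro s hs
    simp only [Finset.mem_filter] at hs
    rw [Finset.insert_erase hs.2]


lemma sum_SigmaNK {N K : ℕ} {M : Type*} [AddCommMonoid M] (f : Finset (Fin K) → M) :
    ∑ σ : SigmaNK N K, f σ.1 = ∑ s ∈ Finset.powersetCard N Finset.univ, f s := by
  rw [Finset.sum_subtype (powersetCard N univ) (fun s => Finset.mem_powersetCard_univ) f]
  rfl


def cExt (N K : ℕ) (C : SigmaNK N K → ℂ) (s : Finset (Fin K)) : ℂ :=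
  if h : s.card = N then C ⟨s, h⟩ else 0

def sg {K : ℕ} (ρ : Finset (Fin K)) (i : Fin K) : ℂ :=
  (-1) ^ (posIn (insert i ρ) i)

def vv (N K : ℕ) (C : SigmaNK N K → ℂ) (ρ : Finset (Fin K)) (i : Fin K) : ℂ :=
  if i ∈ ρ then 0 else sg ρ i * cExt N K C (insert i ρ)


lemma cExt_coe {N K : ℕ} (C : SigmaNK N K → ℂ) (σ : SigmaNK N K) :
    cExt N K C σ.1 = C σ := dif_pos σ.2


lemma conj_sg {K : ℕ} (ρ : Finset (Fin K)) (i : Fin K) : conj (sg ρ i) = sg ρ i := by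
  unfold sg; rw [map_pow, map_neg, map_one]


lemma gamma1_eq {N K : ℕ} (hN : 1 ≤ N) (C : SigmaNK N K → ℂ) (i j : Fin K) :
    gamma1 N K C i j
      = ∑ ρ ∈ Finset.powersetCard (N-1) Finset.univ, vv N K C ρ i * conj (vv N K C ρ j) := by
  unfold gamma1
  have step0 : ∀ σ τ : SigmaNK N K,
      (if i ∈ σ.1 ∧ j ∈ τ.1 ∧ σ.1.erase i = τ.1.erase j then
        (-1 : ℂ) ^ (posIn σ.1 i + posIn τ.1 j) * C σ * conj (C τ) else 0)
      = (if i ∈ σ.1 ∧ j ∈ τ.1 ∧ σ.1.erase i = τ.1.erase j then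
        (-1 : ℂ) ^ (posIn σ.1 i + posIn τ.1 j) * cExt N K C σ.1 * conj (cExt N K C τ.1)
        else 0) := by
    intro σ τ; rw [cExt_coe, cExt_coe]
  simp_rw [step0]
  rw [sum_SigmaNK (fun s => ∑ τ : SigmaNK N K,
      if i ∈ s ∧ j ∈ τ.1 ∧ s.erase i = τ.1.erase j then
        (-1 : ℂ) ^ (posIn s i + posIn τ.1 j) * cExt N K C s * conj (cExt N K C τ.1) else 0)]
  rw [Finset.sum_congr rfl (fun s _ => sum_SigmaNK (fun t =>
      if i ∈ s ∧ j ∈ t ∧ s.erase i = t.erase j then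
        (-1 : ℂ) ^ (posIn s i + posIn t j) * cExt N K C s * conj (cExt N K C t) else 0))]
  have step1 : ∀ s ∈ Finset.powersetCard N Finset.univ,
      (∑ t ∈ Finset.powersetCard N Finset.univ,
        if i ∈ s ∧ j ∈ t ∧ s.erase i = t.erase j then
          (-1 : ℂ) ^ (posIn s i + posIn t j) * cExt N K C s * conj (cExt N K C t) else 0)
      = (if i ∈ s then (if j ∉ s.erase i then
          (-1 : ℂ) ^ (posIn s i + posIn (insert j (s.erase i)) j) * cExt N K C s
            * conj (cExt N K C (insert j (s.erase i))) else 0) else 0) := by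
    intro s hs
    rw [Finset.mem_powersetCard_univ] at hs
    have hcond : ∀ t : Finset (Fin K),
        (i ∈ s ∧ j ∈ t ∧ s.erase i = t.erase j)
          ↔ (t = insert j (s.erase i) ∧ (i ∈ s ∧ j ∉ s.erase i)) := by
      intro t
      constructor
      · rintro ⟨h1, h2, h3⟩
        have heq : t = insert j (s.erase i) := by
          rw [h3, Finset.insert_erase h2]
        refine ⟨heq, h1, fun hj => Finset.notMem_erase j t (h3 ▸ hj)⟩
      · rintro ⟨rfl, h1, h2⟩
        exact ⟨h1, Finset.mem_insert_self _ _, (Finset.erase_insert h2).symm⟩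
    by_cases hP : i ∈ s ∧ j ∉ s.erase i
    · have ht0 : insert j (s.erase i) ∈ Finset.powersetCard N Finset.univ := by
        rw [Finset.mem_powersetCard_univ, Finset.card_insert_of_notMem hP.2,
          Finset.card_erase_of_mem hP.1, hs]
        omega
      have heq : ∀ t : Finset (Fin K),
          (i ∈ s ∧ j ∈ t ∧ s.erase i = t.erase j) ↔ t = insert j (s.erase i) := by
        intro t; rw [hcond t]; simp [hP]
      simp_rw [heq]
      rw [Finset.sum_ite_eq' (Finset.powersetCard N Finset.univ) (insert j (s.erase i))
        (fun t => (-1 : ℂ) ^ (posIn s i + posIn t j) * cExt N K C s * conj (cExt N K C t))]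
      rw [if_pos ht0, if_pos hP.1, if_pos hP.2]
    · rw [Finset.sum_eq_zero (fun t _ => if_neg (fun hc => hP ((hcond t).1 hc).2))]
      by_cases h1 : i ∈ s
      · rw [if_pos h1, if_neg (fun hj => hP ⟨h1, hj⟩)]
      · rw [if_neg h1]
  rw [Finset.sum_congr rfl step1]
  have hN' : N - 1 + 1 = N := Nat.succ_pred_eq_of_pos hN
  have hri := sum_insert_reindex (m := N-1) i (f := fun s =>
     if j ∉ s.erase i then
          (-1 : ℂ) ^ (posIn s i + posIn (insert j (s.erase i)) j) * cExt N K C s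
            * conj (cExt N K C (insert j (s.erase i))) else 0)
  rw [hN'] at hri
  rw [hri]
  refine Finset.sum_congr rfl (fun ρ hρ => ?_)
  by_cases hi : i ∈ ρ
  · rw [if_neg (by simpa using hi)]
    rw [show vv N K C ρ i = 0 from if_pos hi, zero_mul]
  · rw [if_pos hi, Finset.erase_insert hi]
    by_cases hj : j ∈ ρ
    · rw [if_neg (by simpa using hj)]
      rw [show vv N K C ρ j = 0 from if_pos hj, map_zero, mul_zero]
    · rw [if_pos hj]
      rw [show vv N K C ρ i = sg ρ i * cExt N K C (insert i ρ) from if_neg hi,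
        show vv N K C ρ j = sg ρ j * cExt N K C (insert j ρ) from if_neg hj,
        map_mul, conj_sg]
      unfold sg
      rw [pow_add]
      ring


lemma neg_one_pow_mul_self (n : ℕ) : ((-1 : ℂ) ^ n) * (-1) ^ n = 1 := by
  rw [← pow_add]; exact Even.neg_one_pow ⟨n, rfl⟩

lemma sg_mul_sg {K : ℕ} (ρ : Finset (Fin K)) (i : Fin K) : sg ρ i * sg ρ i = 1 :=
  neg_one_pow_mul_self _

section CAR
variable {N K : ℕ} (C : SigmaNK N K → ℂ) (x : Fin K → ℂ)

def ww (ρ : Finset (Fin K)) : ℂ := ∑ j, vv N K C ρ j * x j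
def ddt (μ : Finset (Fin K)) (i : Fin K) : ℂ :=
  if i ∈ μ then (-1 : ℂ) ^ (posIn μ i) * conj (x i) * cExt N K C (μ.erase i) else 0
def dd (μ : Finset (Fin K)) : ℂ := ∑ i, ddt C x μ i

lemma split_diag (F : Fin K → Fin K → ℂ) :
    ∑ i, ∑ j, F i j = (∑ i, F i i) + ∑ i, ∑ j, if j ≠ i then F i j else 0 := by
  rw [← Finset.sum_add_distrib]
  refine Finset.sum_congr rfl fun i _ => ?_
  have hpt : ∀ j, F i j = (if j = i then F i j else 0) + (if j ≠ i then F i j else 0) := by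
    intro j; by_cases h : j = i <;> simp [h]
  rw [Finset.sum_congr rfl (fun j _ => hpt j), Finset.sum_add_distrib,
    Finset.sum_ite_eq' Finset.univ i (F i), if_pos (Finset.mem_univ i)]

lemma sum_ite_const {c : Prop} [Decidable c] {A : Finset (Finset (Fin K))}
    (F : Finset (Fin K) → ℂ) :
    ∑ ρ ∈ A, (if c then F ρ else 0) = if c then ∑ ρ ∈ A, F ρ else 0 := by
  split_ifs <;> simp

lemma sum_antisym (S : Fin K → Fin K → ℂ) :
    ∑ i, ∑ j, (if j ≠ i then S i j - S j i else 0) = 0 := by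
  have hpt : ∀ i j : Fin K, (if j ≠ i then S i j - S j i else 0)
      = -(if i ≠ j then S j i - S i j else 0) := by
    intro i j
    by_cases h : j = i
    · simp [h]
    · rw [if_pos h, if_pos (Ne.symm h)]; ring
  have h1 : ∑ i, ∑ j, (if j ≠ i then S i j - S j i else 0)
      = -∑ i, ∑ j, (if i ≠ j then S j i - S i j else 0) := by
    rw [← Finset.sum_neg_distrib]
    refine Finset.sum_congr rfl fun i _ => ?_
    rw [← Finset.sum_neg_distrib]
    exact Finset.sum_congr rfl fun j _ => hpt i j
  rw [Finset.sum_comm (f := fun i j => if i ≠ j then S j i - S i j else 0)] at h1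
  exact add_self_eq_zero.mp (by linear_combination h1)

theorem car (hN : 1 ≤ N) :
    (∑ ρ ∈ Finset.powersetCard (N-1) Finset.univ, conj (ww C x ρ) * ww C x ρ)
      + (∑ μ ∈ Finset.powersetCard (N+1) Finset.univ, conj (dd C x μ) * dd C x μ)
    = (∑ i, conj (x i) * x i)
      * (∑ s ∈ Finset.powersetCard N Finset.univ, conj (cExt N K C s) * cExt N K C s) := by
  classical
  have hN' : N - 1 + 1 = N := Nat.succ_pred_eq_of_pos hN
  set q : Finset (Fin K) → ℂ := fun s => conj (cExt N K C s) * cExt N K C s with hq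
  set p : Fin K → ℂ := fun i => conj (x i) * x i with hp
  -- expand ww
  have hww : ∀ ρ, conj (ww C x ρ) * ww C x ρ
      = ∑ i, ∑ j, conj (vv N K C ρ i * x i) * (vv N K C ρ j * x j) := by
    intro ρ
    rw [ww, map_sum, Finset.sum_mul_sum]
  have hdd : ∀ μ, conj (dd C x μ) * dd C x μ
      = ∑ i, ∑ j, conj (ddt C x μ i) * (ddt C x μ j) := by
    intro μ
    rw [dd, map_sum, Finset.sum_mul_sum]
  simp_rw [hww, hdd]
  rw [Finset.sum_congr rfl (fun ρ _ => split_diag _),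
      Finset.sum_congr rfl (fun μ _ => split_diag _),
      Finset.sum_add_distrib, Finset.sum_add_distrib]
  -- diagonal parts
  have hD1pt : ∀ ρ i, conj (vv N K C ρ i * x i) * (vv N K C ρ i * x i)
      = (if i ∉ ρ then q (insert i ρ) * p i else 0) := by
    intro ρ i
    by_cases hi : i ∈ ρ
    · rw [if_neg (by simpa using hi), vv, if_pos hi]; ring
    · rw [if_pos hi, vv, if_neg hi, map_mul, map_mul, conj_sg, hq, hp]
      simp only []
      linear_combination (conj (cExt N K C (insert i ρ)) * conj (x i)
        * cExt N K C (insert i ρ) * x i) * sg_mul_sg ρ i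
  have hD2pt : ∀ μ i, conj (ddt C x μ i) * (ddt C x μ i)
      = (if i ∈ μ then q (μ.erase i) * p i else 0) := by
    intro μ i
    by_cases hi : i ∈ μ
    · rw [if_pos hi, ddt, if_pos hi, map_mul, map_mul, map_pow, map_neg, map_one,
        Complex.conj_conj, hq, hp]
      simp only []
      linear_combination (x i * conj (x i) * conj (cExt N K C (μ.erase i))
        * cExt N K C (μ.erase i)) * neg_one_pow_mul_self (posIn μ i)
    · rw [if_neg hi]
      simp only [ddt, if_neg hi, map_zero, zero_mul]
  have hD1 : (∑ ρ ∈ Finset.powersetCard (N-1) Finset.univ,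
        ∑ i, conj (vv N K C ρ i * x i) * (vv N K C ρ i * x i))
      = ∑ i, ∑ s ∈ Finset.powersetCard N Finset.univ, (if i ∈ s then q s * p i else 0) := by
    simp_rw [hD1pt]
    rw [Finset.sum_comm]
    refine Finset.sum_congr rfl fun i _ => ?_
    have := sum_insert_reindex (m := N - 1) i (fun s => q s * p i)
    rw [hN'] at this
    rw [← this]
  have hD2 : (∑ μ ∈ Finset.powersetCard (N+1) Finset.univ,
        ∑ i, conj (ddt C x μ i) * (ddt C x μ i))
      = ∑ i, ∑ s ∈ Finset.powersetCard N Finset.univ, (if i ∉ s then q s * p i else 0) := by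
    simp_rw [hD2pt]
    rw [Finset.sum_comm]
    refine Finset.sum_congr rfl fun i _ => ?_
    have := sum_insert_reindex (m := N) i (fun μ => q (μ.erase i) * p i)
    rw [this]
    refine Finset.sum_congr rfl fun s _ => ?_
    by_cases hi : i ∈ s
    · rw [if_neg (by simpa using hi), if_neg (by simpa using hi)]
    · rw [if_pos hi, if_pos hi, Finset.erase_insert hi]
  -- off-diagonal parts
  set S : Fin K → Fin K → ℂ := fun i j =>
    ∑ ρ ∈ Finset.powersetCard (N-1) Finset.univ,
      conj (vv N K C ρ i * x i) * (vv N K C ρ j * x j) with hS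
  have hO1 : (∑ ρ ∈ Finset.powersetCard (N-1) Finset.univ, ∑ i, ∑ j,
        if j ≠ i then conj (vv N K C ρ i * x i) * (vv N K C ρ j * x j) else 0)
      = ∑ i, ∑ j, (if j ≠ i then S i j else 0) := by
    rw [Finset.sum_comm]
    refine Finset.sum_congr rfl fun i _ => ?_
    rw [Finset.sum_comm]
    refine Finset.sum_congr rfl fun j _ => ?_
    rw [sum_ite_const]
  -- key computation for the O2 inner sums
  have key : ∀ i j : Fin K, j ≠ i →
      (∑ μ ∈ Finset.powersetCard (N+1) Finset.univ, conj (ddt C x μ i) * (ddt C x μ j))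
        = - S j i := by
    intro i j hji
    set H : Finset (Fin K) → ℂ := fun μ =>
      ((-1 : ℂ) ^ (posIn μ i) * (-1 : ℂ) ^ (posIn μ j))
        * ((x i * conj (x j)) * (conj (cExt N K C (μ.erase i)) * cExt N K C (μ.erase j)))
      with hH
    have hpt : ∀ μ, conj (ddt C x μ i) * (ddt C x μ j)
        = if i ∈ μ then (if j ∈ μ then H μ else 0) else 0 := by
      intro μ
      by_cases hi : i ∈ μ
      · by_cases hj : j ∈ μ
        · rw [if_pos hi, if_pos hj]
          simp only [ddt, if_pos hi, if_pos hj, map_mul, map_pow, map_neg, map_one,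
            Complex.conj_conj, hH]
          ring
        · rw [if_pos hi, if_neg hj]
          simp only [ddt, if_neg hj, mul_zero]
      · rw [if_neg hi]
          <;> simp only [ddt, if_neg hi, map_zero, zero_mul]
    simp_rw [hpt]
    rw [sum_insert_reindex (m := N) i (fun μ => if j ∈ μ then H μ else 0)]
    have swap1 : ∀ s : Finset (Fin K),
        (if i ∉ s then (if j ∈ insert i s then H (insert i s) else 0) else 0)
          = (if j ∈ s then (if i ∉ s then H (insert i s) else 0) else 0) := by
      intro s
      by_cases hi : i ∈ s
      · simp [hi]
      · by_cases hj : j ∈ s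
        · simp [hi, hj]
        · have : j ∉ insert i s := by simp [hji, hj]
          simp [hi, hj, this]
    rw [Finset.sum_congr rfl (fun s _ => swap1 s)]
    have hri := sum_insert_reindex (m := N - 1) j
      (fun s => if i ∉ s then H (insert i s) else 0)
    rw [hN'] at hri
    rw [hri]
    rw [hS, ← Finset.sum_neg_distrib]
    refine Finset.sum_congr rfl fun ρ _ => ?_
    by_cases hj : j ∈ ρ
    · rw [if_neg (by simpa using hj)]
      simp [vv, if_pos hj]
    · rw [if_pos hj]
      by_cases hi : i ∈ ρ
      · have hmem : i ∈ insert j ρ := Finset.mem_insert_of_mem hi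
        rw [if_neg (not_not_intro hmem)]
        simp [vv, if_pos hi]
      · have hins : i ∉ insert j ρ := by
          simp only [Finset.mem_insert]
          push_neg
          exact ⟨Ne.symm hji, hi⟩
        rw [if_pos hins]
        have he1 : (insert i (insert j ρ)).erase i = insert j ρ :=
          Finset.erase_insert hins
        have he2 : (insert i (insert j ρ)).erase j = insert i ρ := by
          rw [Finset.erase_insert_of_ne (Ne.symm hji), Finset.erase_insert hj]
        rw [hH]
        simp only []
        rw [he1, he2, ← pow_add, sign_flip ρ (Ne.symm hji) hi hj]
        rw [vv, if_neg hj, vv, if_neg hi, map_mul, map_mul, conj_sg]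
        simp only [sg]
        ring
  have hO2 : (∑ μ ∈ Finset.powersetCard (N+1) Finset.univ, ∑ i, ∑ j,
        if j ≠ i then conj (ddt C x μ i) * (ddt C x μ j) else 0)
      = ∑ i, ∑ j, (if j ≠ i then - S j i else 0) := by
    rw [Finset.sum_comm]
    refine Finset.sum_congr rfl fun i _ => ?_
    rw [Finset.sum_comm]
    refine Finset.sum_congr rfl fun j _ => ?_
    rw [sum_ite_const]
    by_cases h : j ≠ i
    · rw [if_pos h, if_pos h, key i j h]
    · rw [if_neg h, if_neg h]
  rw [hD1, hD2, hO1, hO2]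
  have hzero : (∑ i, ∑ j, (if j ≠ i then S i j else 0))
      + (∑ i, ∑ j, (if j ≠ i then - S j i else 0)) = 0 := by
    refine Eq.trans ?_ (sum_antisym S)
    rw [← Finset.sum_add_distrib]
    refine Finset.sum_congr rfl fun i _ => ?_
    rw [← Finset.sum_add_distrib]
    refine Finset.sum_congr rfl fun j _ => ?_
    by_cases h : j ≠ i
    · rw [if_pos h, if_pos h, if_pos h]; ring
    · rw [if_neg h, if_neg h, if_neg h]; ring
  have hdiag : (∑ i, ∑ s ∈ Finset.powersetCard N Finset.univ,
        (if i ∈ s then q s * p i else 0))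
      + (∑ i, ∑ s ∈ Finset.powersetCard N Finset.univ, (if i ∉ s then q s * p i else 0))
      = (∑ i, p i) * (∑ s ∈ Finset.powersetCard N Finset.univ, q s) := by
    rw [← Finset.sum_add_distrib, Finset.sum_mul]
    refine Finset.sum_congr rfl fun i _ => ?_
    rw [← Finset.sum_add_distrib, Finset.mul_sum]
    refine Finset.sum_congr rfl fun s _ => ?_
    by_cases h : i ∈ s
    · rw [if_pos h, if_neg (by simpa using h)]; ring
    · rw [if_neg h, if_pos h]; ring
  calc _ = ((∑ i, ∑ s ∈ Finset.powersetCard N Finset.univ, (if i ∈ s then q s * p i else 0))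
      + (∑ i, ∑ s ∈ Finset.powersetCard N Finset.univ, (if i ∉ s then q s * p i else 0)))
      + ((∑ i, ∑ j, (if j ≠ i then S i j else 0))
        + (∑ i, ∑ j, (if j ≠ i then - S j i else 0))) := by ring
    _ = _ := by rw [hzero, hdiag, add_zero]

end CAR

end Aux

/-- for normalized C, the matrix Γ(C) is Hermitian, its diagonal entries
are Γ(C)_ii = Σ_{σ ∋ i} |c_σ|² ∈ [0,1], its trace is N, and both Γ(C) and I − Γ(C)
are positive semidefinite. -/
theorem GammaM_properties (N K : ℕ) (hN : 1 ≤ N) (hNK : N ≤ K)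
    (C : SigmaNK N K → ℂ) (hC : ∑ σ : SigmaNK N K, ‖C σ‖ ^ 2 = 1) :
    (GammaM N K C).IsHermitian ∧
    (∀ i : Fin K,
      GammaM N K C i i =
        ((∑ σ : SigmaNK N K, if i ∈ σ.1 then ‖C σ‖ ^ 2 else 0 : ℝ) : ℂ)) ∧
    (∀ i : Fin K,
      0 ≤ (GammaM N K C i i).re ∧ (GammaM N K C i i).re ≤ 1 ∧ (GammaM N K C i i).im = 0) ∧
    Matrix.trace (GammaM N K C) = (N : ℂ) ∧
    (GammaM N K C).PosSemidef ∧
    ((1 : Matrix (Fin K) (Fin K) ℂ) - GammaM N K C).PosSemidef := by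
  classical
  have hN' : N - 1 + 1 = N := Nat.succ_pred_eq_of_pos hN
  set T := Finset.powersetCard (N-1) (Finset.univ : Finset (Fin K)) with hT
  set Sbig := Finset.powersetCard N (Finset.univ : Finset (Fin K)) with hSc
  set U := Finset.powersetCard (N+1) (Finset.univ : Finset (Fin K)) with hU
  have Gij : ∀ i j : Fin K, GammaM N K C i j
      = ∑ ρ ∈ T, conj (vv N K C ρ i) * vv N K C ρ j := by
    intro i j
    show conj (gamma1 N K C i j) = _
    rw [gamma1_eq hN C i j, map_sum]
    refine Finset.sum_congr rfl fun ρ _ => ?_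
    rw [map_mul, Complex.conj_conj]
  have herm : (GammaM N K C).IsHermitian := by
    show Matrix.conjTranspose (GammaM N K C) = GammaM N K C
    ext i j
    rw [Matrix.conjTranspose_apply, RCLike.star_def, Gij j i, Gij i j, map_sum]
    refine Finset.sum_congr rfl fun ρ _ => ?_
    rw [map_mul, Complex.conj_conj]
    ring
  have hnsq : ∀ σ : SigmaNK N K, ‖C σ‖ ^ 2 = Complex.normSq (C σ) := by
    intro σ; rw [Complex.normSq_eq_norm_sq]
  have diagR : ∀ i : Fin K,
      (∑ σ : SigmaNK N K, if i ∈ σ.1 then ‖C σ‖ ^ 2 else 0 : ℝ)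
        = ∑ ρ ∈ T, Complex.normSq (vv N K C ρ i) := by
    intro i
    have h0 : ∀ σ : SigmaNK N K,
        (if i ∈ σ.1 then ‖C σ‖ ^ 2 else 0)
          = (if i ∈ σ.1 then Complex.normSq (cExt N K C σ.1) else 0) := by
      intro σ; rw [cExt_coe, hnsq]
    rw [Finset.sum_congr rfl fun σ _ => h0 σ,
      sum_SigmaNK (fun s => if i ∈ s then Complex.normSq (cExt N K C s) else 0)]
    have hri := sum_insert_reindex (m := N - 1) i
      (fun s => Complex.normSq (cExt N K C s))
    rw [hN'] at hri
    rw [hri, hT]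
    refine Finset.sum_congr rfl fun ρ _ => ?_
    by_cases hi : i ∈ ρ
    · rw [if_neg (by simpa using hi), vv, if_pos hi, map_zero]
    · rw [if_pos hi, vv, if_neg hi, map_mul]
      have : Complex.normSq (sg ρ i) = 1 := by
        rw [sg, map_pow, Complex.normSq_neg, Complex.normSq_one, one_pow]
      rw [this, one_mul]
  have diag : ∀ i : Fin K, GammaM N K C i i
      = ((∑ σ : SigmaNK N K, if i ∈ σ.1 then ‖C σ‖ ^ 2 else 0 : ℝ) : ℂ) := by
    intro i
    rw [Gij i i, diagR i, Complex.ofReal_sum]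
    refine Finset.sum_congr rfl fun ρ _ => ?_
    rw [mul_comm, Complex.mul_conj]
  have hreal_nonneg : ∀ i : Fin K,
      0 ≤ (∑ σ : SigmaNK N K, if i ∈ σ.1 then ‖C σ‖ ^ 2 else 0 : ℝ) := by
    intro i
    refine Finset.sum_nonneg fun σ _ => ?_
    by_cases h : i ∈ σ.1
    · rw [if_pos h]; positivity
    · rw [if_neg h]
  have hreal_le : ∀ i : Fin K,
      (∑ σ : SigmaNK N K, if i ∈ σ.1 then ‖C σ‖ ^ 2 else 0 : ℝ) ≤ 1 := by
    intro i
    calc (∑ σ : SigmaNK N K, if i ∈ σ.1 then ‖C σ‖ ^ 2 else 0 : ℝ)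
        ≤ ∑ σ : SigmaNK N K, ‖C σ‖ ^ 2 := by
          refine Finset.sum_le_sum fun σ _ => ?_
          by_cases h : i ∈ σ.1
          · rw [if_pos h]
          · rw [if_neg h]; positivity
      _ = 1 := hC
  have bounds : ∀ i : Fin K,
      0 ≤ (GammaM N K C i i).re ∧ (GammaM N K C i i).re ≤ 1
        ∧ (GammaM N K C i i).im = 0 := by
    intro i
    rw [diag i, Complex.ofReal_re, Complex.ofReal_im]
    exact ⟨hreal_nonneg i, hreal_le i, rfl⟩
  have htrace : Matrix.trace (GammaM N K C) = (N : ℂ) := by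
    have hreal : (∑ i, ∑ σ : SigmaNK N K, if i ∈ σ.1 then ‖C σ‖ ^ 2 else 0 : ℝ)
        = (N : ℝ) := by
      rw [Finset.sum_comm]
      have hper : ∀ σ : SigmaNK N K,
          (∑ i, if i ∈ σ.1 then ‖C σ‖ ^ 2 else 0 : ℝ) = (N : ℝ) * ‖C σ‖ ^ 2 := by
        intro σ
        rw [Finset.sum_ite_mem, Finset.univ_inter, Finset.sum_const, σ.2, nsmul_eq_mul]
      rw [Finset.sum_congr rfl fun σ _ => hper σ, ← Finset.mul_sum, hC, mul_one]
    rw [Matrix.trace]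
    have : ∀ i : Fin K, (GammaM N K C).diag i
        = ((∑ σ : SigmaNK N K, if i ∈ σ.1 then ‖C σ‖ ^ 2 else 0 : ℝ) : ℂ) := fun i => diag i
    rw [Finset.sum_congr rfl fun i _ => this i, ← Complex.ofReal_sum, hreal]
    norm_cast
  have nn : ∀ z : ℂ, 0 ≤ conj z * z := by
    intro z
    rw [mul_comm, Complex.mul_conj]
    rw [Complex.zero_le_real]
    exact Complex.normSq_nonneg z
  have QF : ∀ x : Fin K → ℂ,
      dotProduct (star x) ((GammaM N K C).mulVec x)
        = ∑ ρ ∈ T, conj (ww C x ρ) * ww C x ρ := by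
    intro x
    have h1 : ∀ ρ, conj (ww C x ρ) * ww C x ρ
        = ∑ i, ∑ j, conj (vv N K C ρ i * x i) * (vv N K C ρ j * x j) := by
      intro ρ
      rw [ww, map_sum, Finset.sum_mul_sum]
    rw [Finset.sum_congr rfl fun ρ _ => h1 ρ, Finset.sum_comm]
    simp only [dotProduct, Matrix.mulVec, Pi.star_apply, RCLike.star_def]
    refine Finset.sum_congr rfl fun i _ => ?_
    have h2 : ∀ j, GammaM N K C i j * x j
        = ∑ ρ ∈ T, (conj (vv N K C ρ i) * vv N K C ρ j) * x j := by
      intro j; rw [Gij i j, Finset.sum_mul]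
    rw [Finset.sum_congr rfl fun j _ => h2 j, Finset.sum_comm, Finset.mul_sum]
    refine Finset.sum_congr rfl fun ρ _ => ?_
    rw [Finset.mul_sum]
    refine Finset.sum_congr rfl fun j _ => ?_
    rw [map_mul]
    ring
  have psd : (GammaM N K C).PosSemidef := by
    refine .of_dotProduct_mulVec_nonneg herm fun x => ?_
    rw [QF x]
    exact Finset.sum_nonneg fun ρ _ => nn _
  have hsum1 : (∑ s ∈ Sbig, conj (cExt N K C s) * cExt N K C s) = 1 := by
    rw [hSc, ← sum_SigmaNK (fun s => conj (cExt N K C s) * cExt N K C s)]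
    have h1 : ∀ σ : SigmaNK N K,
        conj (cExt N K C σ.1) * cExt N K C σ.1 = ((‖C σ‖ ^ 2 : ℝ) : ℂ) := by
      intro σ
      rw [cExt_coe, mul_comm, Complex.mul_conj, hnsq]
    rw [Finset.sum_congr rfl fun σ _ => h1 σ, ← Complex.ofReal_sum, hC, Complex.ofReal_one]
  have psd2 : ((1 : Matrix (Fin K) (Fin K) ℂ) - GammaM N K C).PosSemidef := by
    refine .of_dotProduct_mulVec_nonneg ((Matrix.isHermitian_one).sub herm) fun x => ?_
    have hq : dotProduct (star x) (((1 : Matrix (Fin K) (Fin K) ℂ)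
          - GammaM N K C).mulVec x)
        = (∑ i, conj (x i) * x i) - ∑ ρ ∈ T, conj (ww C x ρ) * ww C x ρ := by
      rw [Matrix.sub_mulVec, dotProduct_sub, Matrix.one_mulVec, QF x]
      congr 1
    rw [hq]
    have hc := car C x hN
    rw [← hT, ← hSc, ← hU, hsum1, mul_one] at hc
    have heq : (∑ i, conj (x i) * x i) - ∑ ρ ∈ T, conj (ww C x ρ) * ww C x ρ
        = ∑ μ ∈ U, conj (dd C x μ) * dd C x μ := by linear_combination -hc
    rw [heq]
    exact Finset.sum_nonneg fun μ _ => nn _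
  exact ⟨herm, diag, bounds, htrace, psd, psd2⟩
end
end

section
/- Assume N ≥ 2. For every C ∈ ℂ^r and all 1 ≤ i,j ≤ K: γ_ij(C) = (2/(N−1)) Σ_{k=1}^K γ_ikjk(C). -/
open MeasureTheory Complex
open scoped BigOperators ComplexConjugate ENNReal

noncomputable section

lemma idx_sorted {K : ℕ} (l : List (Fin K)) (h : l.Pairwise (· < ·)) (i : Fin K) (hi : i ∈ l) :
    l.idxOf i = l.countP (fun x => x < i) := by
  induction l with
  | nil => simp at hi
  | cons a t ih =>
    have ha : ∀ x ∈ t, a < x := fun x hx => List.rel_of_pairwise_cons h hx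
    rcases List.mem_cons.mp hi with rfl | hit
    · rw [List.idxOf_cons_self, List.countP_cons]
      have h0 : t.countP (fun x => x < i) = 0 := by
        rw [List.countP_eq_zero]
        intro x hx
        simpa using not_lt.mpr (le_of_lt (ha x hx))
      simp [h0]
    · have hne : a ≠ i := fun e => absurd (e ▸ ha i hit) (lt_irrefl _)
      rw [List.idxOf_cons_ne _ hne, List.countP_cons]
      have hd : decide (a < i) = true := by simpa using ha i hit
      rw [ih (List.Pairwise.of_cons h) hit, hd]
      simp [Nat.succ_eq_add_one]

lemma posIn_eq_card {K : ℕ} (s : Finset (Fin K)) (i : Fin K) (hi : i ∈ s) :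
    posIn s i = (s.filter (· < i)).card := by
  unfold posIn
  rw [idx_sorted _ (Finset.sortedLT_sort s).pairwise i ((Finset.mem_sort _).mpr hi),
    (Finset.sort_perm_toList s (·≤·)).countP_eq,
    ← Multiset.coe_countP, Finset.coe_toList, Multiset.countP_eq_card_filter]
  rfl

lemma neg_one_pow_congr' {x y : ℕ} (h : x % 2 = y % 2) : ((-1:ℂ))^x = (-1)^y := by
  rw [neg_one_pow_eq_pow_mod_two, h, ← neg_one_pow_eq_pow_mod_two]

lemma key_pow (a b m p q : ℕ) :
    ((-1:ℂ))^p * (-1)^(a + (m + p)) * ((-1)^q * (-1)^(b + (m + q))) = (-1)^(a+b) := by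
  rw [← pow_add, ← pow_add, ← pow_add]
  apply neg_one_pow_congr'
  omega

lemma sgn_prod {K : ℕ} (S : Finset (Fin K)) (i j k : Fin K)
    (hi : i ∉ S) (hj : j ∉ S) (hk : k ∈ S) :
    sgn2 (insert i S) i k * sgn2 (insert j S) j k
      = (-1:ℂ) ^ (posIn (insert i S) i + posIn (insert j S) j) := by
  have hki : k ≠ i := fun e => hi (e ▸ hk)
  have hkj : k ≠ j := fun e => hj (e ▸ hk)
  have hkSi : k ∈ insert i S := Finset.mem_insert_of_mem hk
  have hkSj : k ∈ insert j S := Finset.mem_insert_of_mem hk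
  set m := (S.filter (· < k)).card with hm
  set p : ℕ := if i < k then 1 else 0 with hp
  set q : ℕ := if j < k then 1 else 0 with hq
  have e1 : posIn (insert i S) k = m + p := by
    rw [posIn_eq_card _ _ hkSi, Finset.filter_insert]
    by_cases h : i < k
    · rw [if_pos h, Finset.card_insert_of_notMem (fun hc => hi (Finset.mem_filter.mp hc).1),
        hp, if_pos h]
    · rw [if_neg h, hp, if_neg h]
      simp [hm]
  have e2 : posIn (insert j S) k = m + q := by
    rw [posIn_eq_card _ _ hkSj, Finset.filter_insert]
    by_cases h : j < k
    · rw [if_pos h, Finset.card_insert_of_notMem (fun hc => hj (Finset.mem_filter.mp hc).1),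
        hq, if_pos h]
    · rw [if_neg h, hq, if_neg h]
      simp [hm]
  have s1 : ((if i = k then 0 else if k < i then 1 else -1) : ℂ) = (-1)^p := by
    rw [if_neg (Ne.symm hki)]
    rcases lt_or_gt_of_ne hki with h | h
    · rw [if_pos h, hp, if_neg (asymm h), pow_zero]
    · rw [if_neg (asymm h), hp, if_pos h, pow_one]
  have s2 : ((if j = k then 0 else if k < j then 1 else -1) : ℂ) = (-1)^q := by
    rw [if_neg (Ne.symm hkj)]
    rcases lt_or_gt_of_ne hkj with h | h
    · rw [if_pos h, hq, if_neg (asymm h), pow_zero]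
    · rw [if_neg (asymm h), hq, if_pos h, pow_one]
  unfold sgn2
  rw [e1, e2, s1, s2]
  exact key_pow _ _ m p q

lemma key_sum (N K : ℕ) (hN : 2 ≤ N) (C : SigmaNK N K → ℂ) (i j : Fin K)
    (σ τ : SigmaNK N K) :
    (∑ k : Fin K, if i ∈ σ.1 ∧ k ∈ σ.1 ∧ j ∈ τ.1 ∧ k ∈ τ.1 ∧
        (σ.1.erase i).erase k = (τ.1.erase j).erase k then
      sgn2 σ.1 i k * sgn2 τ.1 j k * C σ * conj (C τ) else 0)
    = ((N : ℂ) - 1) *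
      (if i ∈ σ.1 ∧ j ∈ τ.1 ∧ σ.1.erase i = τ.1.erase j then
        (-1 : ℂ) ^ (posIn σ.1 i + posIn τ.1 j) * C σ * conj (C τ) else 0) := by
  by_cases hc : i ∈ σ.1 ∧ j ∈ τ.1 ∧ σ.1.erase i = τ.1.erase j
  · obtain ⟨hi, hj, hS⟩ := hc
    rw [if_pos ⟨hi, hj, hS⟩]
    set S := σ.1.erase i with hSdef
    have hiS : i ∉ S := Finset.notMem_erase i σ.1
    have hjS : j ∉ S := hS ▸ Finset.notMem_erase j τ.1
    have hσ : σ.1 = insert i S := (Finset.insert_erase hi).symm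
    have hτ : τ.1 = insert j S := by rw [hS]; exact (Finset.insert_erase hj).symm
    have hterm : ∀ k ∈ S,
        (if i ∈ σ.1 ∧ k ∈ σ.1 ∧ j ∈ τ.1 ∧ k ∈ τ.1 ∧
            (σ.1.erase i).erase k = (τ.1.erase j).erase k then
          sgn2 σ.1 i k * sgn2 τ.1 j k * C σ * conj (C τ) else 0)
        = (-1 : ℂ) ^ (posIn σ.1 i + posIn τ.1 j) * C σ * conj (C τ) := by
      intro k hk
      have hkσ : k ∈ σ.1 := hσ ▸ Finset.mem_insert_of_mem hk
      have hkτ : k ∈ τ.1 := hτ ▸ Finset.mem_insert_of_mem hk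
      rw [if_pos ⟨hi, hkσ, hj, hkτ, by rw [hSdef.symm.trans hS]⟩]
      have := sgn_prod S i j k hiS hjS hk
      rw [← hσ, ← hτ] at this
      rw [mul_assoc, mul_assoc, ← mul_assoc (sgn2 σ.1 i k), this]
      ring
    rw [← Finset.sum_subset (Finset.subset_univ S)]
    · rw [Finset.sum_congr rfl hterm, Finset.sum_const, nsmul_eq_mul]
      have hcard : S.card = N - 1 := by
        rw [hSdef, Finset.card_erase_of_mem hi, σ.2]
      rw [hcard, Nat.cast_sub (le_trans one_le_two hN), Nat.cast_one]
    · intro k _ hkS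
      by_cases hki : k = i
      · split_ifs with hcond
        · simp [sgn2, hki]
        · rfl
      · rw [if_neg]
        rintro ⟨-, hkσ, -, -, -⟩
        exact hkS (Finset.mem_erase.mpr ⟨hki, hkσ⟩)
  · rw [if_neg hc, mul_zero]
    apply Finset.sum_eq_zero
    intro k _
    split_ifs with h
    · obtain ⟨h1, h2, h3, h4, h5⟩ := h
      by_cases hki : k = i
      · subst hki; simp [sgn2]
      · by_cases hkj : k = j
        · subst hkj; simp [sgn2]
        · exfalso
          apply hc
          refine ⟨h1, h3, ?_⟩
          have : insert k ((σ.1.erase i).erase k) = insert k ((τ.1.erase j).erase k) := by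
            rw [h5]
          rwa [Finset.insert_erase (Finset.mem_erase.mpr ⟨hki, h2⟩),
            Finset.insert_erase (Finset.mem_erase.mpr ⟨hkj, h4⟩)] at this
    · rfl

/-- for N ≥ 2 and any C ∈ ℂ^r, γ_ij(C) = (2/(N−1)) Σ_k γ_ikjk(C). -/
theorem gamma1_eq_sum_gamma2 (N K : ℕ) (hN : 2 ≤ N) (hNK : N ≤ K)
    (C : SigmaNK N K → ℂ) (i j : Fin K) :
    gamma1 N K C i j = (2 / ((N : ℂ) - 1)) * ∑ k : Fin K, gamma2 N K C i k j k := by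
  have hne : (N : ℂ) - 1 ≠ 0 := by
    have : (N : ℂ) ≠ 1 := by
      intro h
      have : N = 1 := Nat.cast_injective (by exact_mod_cast h)
      omega
    exact sub_ne_zero.mpr this
  have hsum : ∑ k : Fin K, gamma2 N K C i k j k
      = (1 / 2 : ℂ) * (((N : ℂ) - 1) * gamma1 N K C i j) := by
    unfold gamma2
    rw [← Finset.mul_sum]
    congr 1
    rw [Finset.sum_comm]
    calc (∑ σ : SigmaNK N K, ∑ k : Fin K, ∑ τ : SigmaNK N K,
          if i ∈ σ.1 ∧ k ∈ σ.1 ∧ j ∈ τ.1 ∧ k ∈ τ.1 ∧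
              (σ.1.erase i).erase k = (τ.1.erase j).erase k then
            sgn2 σ.1 i k * sgn2 τ.1 j k * C σ * conj (C τ) else 0)
        = ∑ σ : SigmaNK N K, ∑ τ : SigmaNK N K, ∑ k : Fin K,
          if i ∈ σ.1 ∧ k ∈ σ.1 ∧ j ∈ τ.1 ∧ k ∈ τ.1 ∧
              (σ.1.erase i).erase k = (τ.1.erase j).erase k then
            sgn2 σ.1 i k * sgn2 τ.1 j k * C σ * conj (C τ) else 0 :=
          Finset.sum_congr rfl (fun σ _ => Finset.sum_comm)
      _ = ∑ σ : SigmaNK N K, ∑ τ : SigmaNK N K, ((N : ℂ) - 1) *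
          (if i ∈ σ.1 ∧ j ∈ τ.1 ∧ σ.1.erase i = τ.1.erase j then
            (-1 : ℂ) ^ (posIn σ.1 i + posIn τ.1 j) * C σ * conj (C τ) else 0) :=
          Finset.sum_congr rfl (fun σ _ => Finset.sum_congr rfl
            (fun τ _ => key_sum N K hN C i j σ τ))
      _ = ((N : ℂ) - 1) * gamma1 N K C i j := by
          unfold gamma1
          rw [Finset.mul_sum]
          exact Finset.sum_congr rfl (fun σ _ => (Finset.mul_sum _ _ _).symm)
  rw [hsum]
  field_simp
end
end
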